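/- Define σ(t) = log(-2μ - t) - log(t - μ) - 3μ/(t - μ) for t ∈ (μ, -2μ), where μ < 0. Then σ is a strictly monotone bijection from (μ, -2μ) onto ℝ; in particular, for every x ∈ ℝ there exists a unique t ∈ (μ, -2μ) with σ(t) = x. -/

import Mathlib

open Filter Set Topology

/-- For `μ < 0`, `σ(t) = log(-2μ-t) - log(t-μ) - 3μ/(t-μ)` is a strictly monotone
bijection from `(μ, -2μ)` onto `ℝ`: it is strictly antitone on the interval, and
every real `x` has a unique preimage `t ∈ (μ, -2μ)`. -/
theorem stmt_1 (μ : ℝ) (hμ : μ < 0) (σ : ℝ → ℝ)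
    (hσ : ∀ t, σ t = Real.log (-2*μ - t) - Real.log (t - μ) - 3*μ/(t - μ)) :
    StrictAntiOn σ (Set.Ioo μ (-2*μ)) ∧
    ∀ x : ℝ, ∃! t : ℝ, t ∈ Set.Ioo μ (-2*μ) ∧ σ t = x := by
  have hanti : StrictAntiOn σ (Set.Ioo μ (-2*μ)) := by
    intro a ha b hb hab
    obtain ⟨ha1, ha2⟩ := ha
    obtain ⟨hb1, hb2⟩ := hb
    have pa : (0:ℝ) < a - μ := by linarith
    have pb : (0:ℝ) < b - μ := by linarith
    rw [hσ a, hσ b]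
    have l1 : Real.log (-2*μ - b) < Real.log (-2*μ - a) :=
      Real.log_lt_log (by linarith) (by linarith)
    have l2 : Real.log (a - μ) < Real.log (b - μ) := Real.log_lt_log pa (by linarith)
    have l3 : 3*μ/(a-μ) < 3*μ/(b-μ) := by
      rw [div_lt_div_iff₀ pa pb]; nlinarith
    linarith
  have hcont : ∀ t ∈ Set.Ioo μ (-2*μ), ContinuousAt σ t := by
    intro t ht
    obtain ⟨ht1, ht2⟩ := ht
    have h1 : (0:ℝ) < t - μ := by linarith
    have h2 : (0:ℝ) < -2*μ - t := by linarith
    have hσf : σ = fun t => Real.log (-2*μ - t) - Real.log (t - μ) - 3*μ/(t - μ) :=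
      funext hσ
    rw [hσf]
    apply ContinuousAt.sub
    apply ContinuousAt.sub
    · exact (continuousAt_const.sub continuousAt_id).log h2.ne'
    · exact (continuousAt_id.sub continuousAt_const).log h1.ne'
    · exact ContinuousAt.div (by fun_prop) (by fun_prop) h1.ne'
  -- limit at μ from the right
  have h0 : Filter.Tendsto (fun t => t - μ) (𝓝[>] μ) (𝓝[>] (0:ℝ)) := by
    apply tendsto_nhdsWithin_of_tendsto_nhds_of_eventually_within
    · have : Filter.Tendsto (fun t : ℝ => t - μ) (𝓝 μ) (𝓝 (μ - μ)) :=
        (continuous_id.sub continuous_const).tendsto μ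
      simpa using this.mono_left nhdsWithin_le_nhds
    · filter_upwards [self_mem_nhdsWithin] with t ht
      simp only [Set.mem_Ioi] at ht ⊢
      linarith
  have htop : Filter.Tendsto σ (𝓝[>] μ) Filter.atTop := by
    have e : σ = fun t => Real.log (-2*μ - t) +
        (-Real.log (t - μ) + -(3*μ) * (t - μ)⁻¹) := by
      funext t; rw [hσ t]; ring
    rw [e]
    apply Filter.Tendsto.add_atTop (C := Real.log (-2*μ - μ))
    · have : ContinuousAt (fun t => Real.log (-2*μ - t)) μ :=
        (Real.continuousAt_log (by nlinarith)).comp (by fun_prop)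
      exact this.tendsto.mono_left nhdsWithin_le_nhds
    · apply Filter.Tendsto.atTop_add_atTop
      · exact tendsto_neg_atBot_atTop.comp
          (Real.tendsto_log_nhdsGT_zero.comp h0)
      · exact Filter.Tendsto.const_mul_atTop (by linarith : (0:ℝ) < -(3*μ))
          (tendsto_inv_nhdsGT_zero.comp h0)
  -- limit at -2μ from the left
  have h0' : Filter.Tendsto (fun t => -2*μ - t) (𝓝[<] (-2*μ)) (𝓝[>] (0:ℝ)) := by
    apply tendsto_nhdsWithin_of_tendsto_nhds_of_eventually_within
    · have : Filter.Tendsto (fun t : ℝ => -2*μ - t) (𝓝 (-2*μ)) (𝓝 (-2*μ - -2*μ)) :=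
        (continuous_const.sub continuous_id).tendsto (-2*μ)
      simpa using this.mono_left nhdsWithin_le_nhds
    · filter_upwards [self_mem_nhdsWithin] with t ht
      simp only [Set.mem_Iio] at ht
      simp only [Set.mem_Ioi]
      linarith
  have hbot : Filter.Tendsto σ (𝓝[<] (-2*μ)) Filter.atBot := by
    have e : σ = fun t => (-Real.log (t - μ) - 3*μ/(t - μ)) + Real.log (-2*μ - t) := by
      funext t; rw [hσ t]; ring
    rw [e]
    apply Filter.Tendsto.add_atBot (C := -Real.log (-2*μ - μ) - 3*μ/(-2*μ - μ))
    · have hp : (0:ℝ) < -2*μ - μ := by linarith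
      have : ContinuousAt (fun t => -Real.log (t - μ) - 3*μ/(t - μ)) (-2*μ) := by
        apply ContinuousAt.sub
        · exact ((continuousAt_id.sub continuousAt_const).log hp.ne').neg
        · exact ContinuousAt.div (by fun_prop) (by fun_prop) hp.ne'
      exact this.tendsto.mono_left nhdsWithin_le_nhds
    · exact Real.tendsto_log_nhdsGT_zero.comp h0'
  refine ⟨hanti, fun x => ?_⟩
  have hIoo_top : Set.Ioo μ (-2*μ) ∈ 𝓝[>] μ :=
    Ioo_mem_nhdsGT_of_mem ⟨le_refl μ, by linarith⟩
  have hIoo_bot : Set.Ioo μ (-2*μ) ∈ 𝓝[<] (-2*μ) :=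
    Ioo_mem_nhdsLT_of_mem ⟨by linarith, le_refl _⟩
  obtain ⟨a, hax, haI⟩ :=
    ((htop.eventually_gt_atTop x).and (Filter.eventually_of_mem hIoo_top fun _ h => h)).exists
  obtain ⟨b, hbx, hbI⟩ :=
    ((hbot.eventually_lt_atBot x).and (Filter.eventually_of_mem hIoo_bot fun _ h => h)).exists
  have hab : a < b := by
    rcases lt_trichotomy a b with h | h | h
    · exact h
    · exfalso; rw [h] at hax; linarith
    · exfalso; have := hanti hbI haI h; linarith
  have hsub : Set.Icc a b ⊆ Set.Ioo μ (-2*μ) := fun t ht =>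
    ⟨lt_of_lt_of_le haI.1 ht.1, lt_of_le_of_lt ht.2 hbI.2⟩
  have hcIcc : ContinuousOn σ (Set.Icc a b) :=
    continuousOn_of_forall_continuousAt fun t ht => hcont t (hsub ht)
  have hmem : x ∈ Set.Icc (σ b) (σ a) := ⟨le_of_lt hbx, le_of_lt hax⟩
  obtain ⟨t, htI, hte⟩ := intermediate_value_Icc' (le_of_lt hab) hcIcc hmem
  refine ⟨t, ⟨hsub htI, hte⟩, fun s hs => ?_⟩
  exact hanti.injOn hs.1 (hsub htI) (hs.2.trans hte.symm)
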